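/- Negligibility of a subset element is local: let X be locally connected, 𝒱 an open cover of X, and (U, I) a pair with U open in X and I ⊆ U. If for each V ∈ 𝒱 the set V ∩ I is negligible in the subspace V ∩ U, then I is negligible in the subspace U. -/
import Mathlib


open Set Topology

/-- An open subset `U` is Z-dense if it meets every non-empty open connected set
in a non-empty connected set. -/
def IsZDense {X : Type*} [TopologicalSpace X] (U : Set X) : Prop :=
  IsOpen U ∧ ∀ C : Set X, IsOpen C → IsConnected C → IsConnected (U ∩ C)

/-- A subset is negligible if its complement is Z-dense. -/
def IsNegligible {X : Type*} [TopologicalSpace X] (I : Set X) : Prop :=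
  IsZDense Iᶜ

lemma image_val_preimage_val {X : Type*} {U s : Set X} (h : s ⊆ U) :
    Subtype.val '' (Subtype.val ⁻¹' s : Set U) = s := by
  rw [Subtype.image_preimage_coe]
  exact inter_eq_self_of_subset_right h

lemma isConnected_preimage_val {X : Type*} [TopologicalSpace X] {U s : Set X} (h : s ⊆ U) :
    IsConnected (Subtype.val ⁻¹' s : Set U) ↔ IsConnected s := by
  constructor
  · rintro ⟨⟨z, hz⟩, hc⟩
    refine ⟨⟨z.1, hz⟩, ?_⟩
    have := IsInducing.subtypeVal.isPreconnected_image.mpr hc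
    rwa [image_val_preimage_val h] at this
  · rintro ⟨⟨x, hx⟩, hc⟩
    refine ⟨⟨⟨x, h hx⟩, hx⟩, ?_⟩
    rw [← IsInducing.subtypeVal.isPreconnected_image, image_val_preimage_val h]
    exact hc

/-- The workhorse: every point of an open `C ⊆ U` has an open neighborhood `W ⊆ C`
with `W \ I` open and connected (hence nonempty). -/
lemma exists_good_nbhd {X : Type*} [TopologicalSpace X] [LocallyConnectedSpace X]
    {𝒱 : Set (Set X)} (hV : ∀ V ∈ 𝒱, IsOpen V) (hcov : ⋃₀ 𝒱 = Set.univ)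
    {U I : Set X} (hU : IsOpen U)
    (hloc : ∀ V ∈ 𝒱, IsNegligible ((Subtype.val ⁻¹' I : Set ↥(V ∩ U))))
    {C : Set X} (hC : IsOpen C) (hCU : C ⊆ U) {x : X} (hx : x ∈ C) :
    ∃ W : Set X, IsOpen W ∧ x ∈ W ∧ W ⊆ C ∧ IsOpen (W \ I) ∧ IsConnected (W \ I) := by
  have hxV : x ∈ ⋃₀ 𝒱 := by rw [hcov]; trivial
  obtain ⟨V, hV𝒱, hxV⟩ := hxV
  have hVC : IsOpen (V ∩ C) := (hV V hV𝒱).inter hC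
  obtain ⟨W, hWsub, hWopen, hxW, hWconn⟩ :=
    locallyConnectedSpace_iff_subsets_isOpen_isConnected.mp ‹LocallyConnectedSpace X› x (V ∩ C)
      (hVC.mem_nhds ⟨hxV, hx⟩)
  have hWVU : W ⊆ V ∩ U := fun y hy => ⟨(hWsub hy).1, hCU (hWsub hy).2⟩
  obtain ⟨hIopen, hIconn⟩ := hloc V hV𝒱
  have hVUopen : IsOpen (V ∩ U) := (hV V hV𝒱).inter hU
  have homap : IsOpenMap (Subtype.val : ↥(V ∩ U) → X) := hVUopen.isOpenMap_subtype_val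
  -- the preimage of W is open and connected in the subtype
  have hWpre_open : IsOpen (Subtype.val ⁻¹' W : Set ↥(V ∩ U)) :=
    hWopen.preimage continuous_subtype_val
  have hWpre_conn : IsConnected (Subtype.val ⁻¹' W : Set ↥(V ∩ U)) :=
    (isConnected_preimage_val hWVU).mpr hWconn
  have hkey : IsConnected ((Subtype.val ⁻¹' I : Set ↥(V ∩ U))ᶜ ∩ Subtype.val ⁻¹' W) :=
    hIconn _ hWpre_open hWpre_conn
  have heq : ((Subtype.val ⁻¹' I : Set ↥(V ∩ U))ᶜ ∩ Subtype.val ⁻¹' W)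
      = Subtype.val ⁻¹' (W \ I) := by
    ext z; simp [mem_diff, and_comm]
  rw [heq] at hkey
  have hWdI_sub : W \ I ⊆ V ∩ U := fun y hy => hWVU hy.1
  have hconn : IsConnected (W \ I) := (isConnected_preimage_val hWdI_sub).mp hkey
  have hopen : IsOpen (W \ I) := by
    have : IsOpen (Subtype.val ⁻¹' (W \ I) : Set ↥(V ∩ U)) := by
      rw [← heq]; exact hIopen.inter hWpre_open
    have := homap _ this
    rwa [image_val_preimage_val hWdI_sub] at this
  exact ⟨W, hWopen, hxW, fun y hy => (hWsub hy).2, hopen, hconn⟩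

/-- Negligibility of a subset element is local: if every member of an open cover
sees `I` as negligible in `V ∩ U`, then `I` is negligible in `U`. -/
theorem isNegligible_of_cover {X : Type*} [TopologicalSpace X] [LocallyConnectedSpace X]
    {𝒱 : Set (Set X)} (hV : ∀ V ∈ 𝒱, IsOpen V) (hcov : ⋃₀ 𝒱 = Set.univ)
    {U I : Set X} (hU : IsOpen U) (hIU : I ⊆ U)
    (hloc : ∀ V ∈ 𝒱, IsNegligible ((Subtype.val ⁻¹' I : Set ↥(V ∩ U)))) :
    IsNegligible ((Subtype.val ⁻¹' I : Set ↥U)) := by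
  -- First: `U \ I` is open in `X`.
  have hUdI_open : IsOpen (U \ I) := by
    rw [isOpen_iff_forall_mem_open]
    rintro x ⟨hxU, hxI⟩
    obtain ⟨W, hWopen, hxW, hWsub, hWIopen, _⟩ :=
      exists_good_nbhd hV hcov hU hloc hU Subset.rfl hxU
    exact ⟨W \ I, fun y hy => ⟨hWsub hy.1, hy.2⟩, hWIopen, hxW, hxI⟩
  constructor
  · -- openness of the complement of the preimage
    have : ((Subtype.val ⁻¹' I : Set ↥U)ᶜ) = Subtype.val ⁻¹' (U \ I) := by
      ext z; simp [z.2]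
    rw [this]
    exact hUdI_open.preimage continuous_subtype_val
  · -- connectedness condition
    intro C' hC'open hC'conn
    set C : Set X := Subtype.val '' C' with hCdef
    have hCU : C ⊆ U := by rintro y ⟨z, _, rfl⟩; exact z.2
    have hCopen : IsOpen C := hU.isOpenMap_subtype_val _ hC'open
    have hCconn : IsConnected C := hC'conn.image _ continuous_subtype_val.continuousOn
    have hpre : Subtype.val ⁻¹' C = C' := Subtype.val_injective.preimage_image C'
    have heq : ((Subtype.val ⁻¹' I : Set ↥U)ᶜ ∩ C') = Subtype.val ⁻¹' (C \ I) := by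
      rw [← hpre]; ext z; simp [mem_diff, and_comm]
    rw [heq]
    rw [isConnected_preimage_val (fun y hy => hCU hy.1)]
    -- Main step: `C \ I` is connected in `X`.
    obtain ⟨x₀, hx₀⟩ := hCconn.1
    obtain ⟨W₀, _, _, hW₀sub, _, hW₀conn⟩ :=
      exists_good_nbhd hV hcov hU hloc hCopen hCU hx₀
    have hne : (C \ I).Nonempty := by
      obtain ⟨y, hyW, hyI⟩ := hW₀conn.1
      exact ⟨y, hW₀sub hyW, hyI⟩
    refine ⟨hne, fun u v hu hv hsub hau hbv => ?_⟩
    by_contra hvac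
    have hempty : ∀ z ∈ C \ I, z ∈ u → z ∈ v → False := fun z hz hzu hzv =>
      hvac ⟨z, hz, hzu, hzv⟩
    -- good neighborhoods whose `\ I` part lives in `u` (resp. `v`)
    set Au : Set X := {x | ∃ W : Set X, IsOpen W ∧ x ∈ W ∧ W ⊆ C ∧ IsOpen (W \ I) ∧
      IsConnected (W \ I) ∧ W \ I ⊆ u} with hAu
    set Av : Set X := {x | ∃ W : Set X, IsOpen W ∧ x ∈ W ∧ W ⊆ C ∧ IsOpen (W \ I) ∧
      IsConnected (W \ I) ∧ W \ I ⊆ v} with hAv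
    have hsplit : ∀ x ∈ C, x ∈ Au ∪ Av := by
      intro x hx
      obtain ⟨W, hWo, hxW, hWC, hWIo, hWIc⟩ := exists_good_nbhd hV hcov hU hloc hCopen hCU hx
      have hWIsub : W \ I ⊆ C \ I := fun y hy => ⟨hWC hy.1, hy.2⟩
      have hWIuv : W \ I ⊆ u ∪ v := fun y hy => hsub (hWIsub hy)
      by_cases hcase : ((W \ I) ∩ v).Nonempty
      · by_cases hcase' : ((W \ I) ∩ u).Nonempty
        · obtain ⟨z, hz, hzu, hzv⟩ := hWIc.2 u v hu hv hWIuv hcase' hcase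
          exact (hempty z (hWIsub hz) hzu hzv).elim
        · -- W \ I misses u, hence lies in v
          have : W \ I ⊆ v := fun y hy => (hWIuv hy).resolve_left
            (fun h => hcase' ⟨y, hy, h⟩)
          exact Or.inr ⟨W, hWo, hxW, hWC, hWIo, hWIc, this⟩
      · have : W \ I ⊆ u := fun y hy => (hWIuv hy).resolve_right
          (fun h => hcase ⟨y, hy, h⟩)
        exact Or.inl ⟨W, hWo, hxW, hWC, hWIo, hWIc, this⟩
    have hAuo : IsOpen Au := by
      rw [isOpen_iff_forall_mem_open]
      rintro x ⟨W, hWo, hxW, hWC, hWIo, hWIc, hWIu⟩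
      exact ⟨W, fun y hy => ⟨W, hWo, hy, hWC, hWIo, hWIc, hWIu⟩, hWo, hxW⟩
    have hAvo : IsOpen Av := by
      rw [isOpen_iff_forall_mem_open]
      rintro x ⟨W, hWo, hxW, hWC, hWIo, hWIc, hWIv⟩
      exact ⟨W, fun y hy => ⟨W, hWo, hy, hWC, hWIo, hWIc, hWIv⟩, hWo, hxW⟩
    have hCAu : (C ∩ Au).Nonempty := by
      obtain ⟨a, ⟨haC, haI⟩, hau⟩ := hau
      rcases hsplit a haC with h | h
      · exact ⟨a, haC, h⟩
      · obtain ⟨W, hWo, haW, hWC, hWIo, hWIc, hWIv⟩ := h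
        exact (hempty a ⟨haC, haI⟩ hau (hWIv ⟨haW, haI⟩)).elim
    have hCAv : (C ∩ Av).Nonempty := by
      obtain ⟨b, ⟨hbC, hbI⟩, hbv⟩ := hbv
      rcases hsplit b hbC with h | h
      · obtain ⟨W, hWo, hbW, hWC, hWIo, hWIc, hWIu⟩ := h
        exact (hempty b ⟨hbC, hbI⟩ (hWIu ⟨hbW, hbI⟩) hbv).elim
      · exact ⟨b, hbC, h⟩
    obtain ⟨z, hzC, hzAu, hzAv⟩ :=
      hCconn.2 Au Av hAuo hAvo (fun x hx => hsplit x hx) hCAu hCAv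
    obtain ⟨Wu, hWuo, hzWu, hWuC, _, _, hWuu⟩ := hzAu
    obtain ⟨Wv, hWvo, hzWv, hWvC, _, _, hWvv⟩ := hzAv
    have hWW : IsOpen (Wu ∩ Wv) := hWuo.inter hWvo
    have hWWU : Wu ∩ Wv ⊆ U := fun y hy => hCU (hWuC hy.1)
    obtain ⟨W', hW'o, hzW', hW'sub, hW'Io, hW'Ic⟩ :=
      exists_good_nbhd hV hcov hU hloc hWW hWWU ⟨hzWu, hzWv⟩
    obtain ⟨w, hwW', hwI⟩ := hW'Ic.1
    have hwu : w ∈ u := hWuu ⟨(hW'sub hwW').1, hwI⟩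
    have hwv : w ∈ v := hWvv ⟨(hW'sub hwW').2, hwI⟩
    exact hempty w ⟨hWuC (hW'sub hwW').1, hwI⟩ hwu hwv
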